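/- The map from the group of affine automorphisms of Mat₂(𝔽₂) stabilizing GL₂(𝔽₂) to the symplectic group Sp(B) (where B(X,Y) = det(X+Y) − det X − det Y) given by taking the linear part is an injective group homomorphism; since both groups have order 720, it is an isomorphism. -/

import Mathlib

namespace Stmt13Aux

abbrev Mat2 := Matrix (Fin 2) (Fin 2) (ZMod 2)

def d2 (M : Mat2) : ZMod 2 := M 0 0 * M 1 1 - M 0 1 * M 1 0

def Bf (A C : Mat2) : ZMod 2 :=
  A 0 0 * C 1 1 + A 1 1 * C 0 0 - A 0 1 * C 1 0 - A 1 0 * C 0 1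

lemma d2_eq (M : Mat2) : M.det = d2 M := Matrix.det_fin_two M

lemma pol (A C : Mat2) : d2 (A + C) = d2 A + d2 C + Bf A C := by
  simp [d2, Bf, Matrix.add_apply]; ring

lemma Bf_add_left (A A' C : Mat2) : Bf (A + A') C = Bf A C + Bf A' C := by
  simp [Bf, Matrix.add_apply]; ring

lemma Bf_self (A : Mat2) : Bf A A = 0 := by
  have : Bf A A = 2 * (A 0 0 * A 1 1) - 2 * (A 0 1 * A 1 0) := by simp [Bf]; ring
  rw [this, show (2 : ZMod 2) = 0 from rfl]; ring

lemma two0 : (2 : ZMod 2) = 0 := rfl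

lemma isUnit_iff_d2 (M : Mat2) : IsUnit M ↔ d2 M = 1 := by
  rw [Matrix.isUnit_iff_isUnit_det, isUnit_iff_ne_zero, d2_eq]
  exact (by decide : ∀ x : ZMod 2, x ≠ 0 ↔ x = 1) _

lemma zmod2_eq_of_iff {x y : ZMod 2} (h : x = 1 ↔ y = 1) : x = y := by
  revert h; revert x y; decide

lemma translate_eq_zero : ∀ c : Mat2, (∀ M : Mat2, d2 (M + c) = d2 M) → c = 0 := by decide

lemma card10 : (Finset.univ.filter (fun M : Mat2 => d2 M = 0)).card = 10 := by decide

lemma card6 : (Finset.univ.filter (fun M : Mat2 => d2 M = 1)).card = 6 := by decide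

lemma repr2 : ∀ X : Mat2, X = X 0 0 • !![1,0;0,0] + X 0 1 • !![0,1;0,0]
    + X 1 0 • !![0,0;1,0] + X 1 1 • !![0,0;0,1] := by decide

/-- membership transfer -/
lemma mem_iff (u : Mat2 ≃ᵃ[ZMod 2] Mat2)
    (h : u '' {M : Mat2 | IsUnit M} = {M : Mat2 | IsUnit M}) (X : Mat2) :
    d2 (u X) = d2 X := by
  apply zmod2_eq_of_iff
  rw [← isUnit_iff_d2, ← isUnit_iff_d2]
  constructor
  · intro hx
    have : u X ∈ u '' {M : Mat2 | IsUnit M} := by rw [h]; exact hx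
    rcases this with ⟨Y, hY, hYX⟩
    rwa [← u.injective hYX]
  · intro hx
    have : u X ∈ u '' {M : Mat2 | IsUnit M} := ⟨X, hx, rfl⟩
    rw [h] at this
    exact this

lemma hform (u : Mat2 ≃ᵃ[ZMod 2] Mat2) (X : Mat2) : u X = u.linear X + u 0 := by
  simpa using u.map_vadd 0 X

lemma symp_of_det (g : Mat2 ≃ₗ[ZMod 2] Mat2) (t : Mat2)
    (hd : ∀ X, d2 (g X + t) = d2 X) : ∀ X Y, Bf (g X) (g Y) = Bf X Y := by
  have ht : d2 t = 0 := by simpa [d2] using hd 0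
  have haa : ∀ A : Mat2, A + A = 0 := by
    intro A; ext i j
    simp only [Matrix.add_apply, Matrix.zero_apply]
    exact (by decide : ∀ x : ZMod 2, x + x = 0) _
  have hdg : ∀ Z : Mat2, d2 (g Z) = d2 Z + Bf (g Z) t := by
    intro Z
    conv_lhs => rw [show g Z = (g Z + t) + t by rw [add_assoc, haa, add_zero]]
    rw [pol, hd, ht, Bf_add_left, Bf_self]
    ring
  intro X Y
  have e1 : Bf (g X) (g Y) = d2 (g (X + Y)) - d2 (g X) - d2 (g Y) := by
    rw [map_add, pol]; ring
  rw [e1, hdg (X + Y), hdg X, hdg Y, map_add, Bf_add_left, pol X Y]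
  ring


lemma d2_zero : d2 (0 : Mat2) = 0 := by decide

lemma Bf_concrete (X : Mat2) (a b c d : ZMod 2) :
    Bf X !![a,b;c,d] = X 0 0 * d + X 1 1 * a - X 0 1 * c - X 1 0 * b := by
  simp [Bf]

lemma image_eq (u : Mat2 ≃ᵃ[ZMod 2] Mat2) (h : ∀ X, d2 (u X) = d2 X) :
    u '' {M : Mat2 | IsUnit M} = {M : Mat2 | IsUnit M} := by
  ext M
  simp only [Set.mem_image, Set.mem_setOf_eq]
  constructor
  · rintro ⟨X, hX, rfl⟩
    rw [isUnit_iff_d2] at hX ⊢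
    rw [h X]; exact hX
  · intro hM
    refine ⟨u.symm M, ?_, u.apply_symm_apply M⟩
    rw [isUnit_iff_d2]
    have h2 := h (u.symm M)
    rw [u.apply_symm_apply] at h2
    rw [← h2]; exact (isUnit_iff_d2 M).mp hM

end Stmt13Aux

open Stmt13Aux


/-- Taking the linear part gives a group isomorphism from the group `𝒜𝒢₂(𝔽₂)` of affine
automorphisms of `Mat₂(𝔽₂)` stabilizing `GL₂(𝔽₂)` onto the symplectic group of the form
`B(X,Y) = det(X+Y) - det X - det Y`: it is multiplicative, injective and surjective. -/
theorem stmt_13 :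
    let Mat := Matrix (Fin 2) (Fin 2) (ZMod 2)
    let GLset : Set Mat := {M | IsUnit M}
    let B : Mat → Mat → ZMod 2 := fun X Y => (X + Y).det - X.det - Y.det
    -- multiplicativity: the linear part of a composite is the composite of linear parts
    (∀ u v : Mat ≃ᵃ[ZMod 2] Mat, u '' GLset = GLset → v '' GLset = GLset →
      (u.trans v).linear = u.linear.trans v.linear) ∧
    -- injectivity
    (∀ u v : Mat ≃ᵃ[ZMod 2] Mat, u '' GLset = GLset → v '' GLset = GLset →
      u.linear = v.linear → u = v) ∧
    -- surjectivity onto Sp(B)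
    (∀ g : Mat ≃ₗ[ZMod 2] Mat, (∀ X Y, B (g X) (g Y) = B X Y) →
      ∃ u : Mat ≃ᵃ[ZMod 2] Mat, u '' GLset = GLset ∧ u.linear = g) ∧
    -- the linear part of any element of 𝒜𝒢₂(𝔽₂) lies in Sp(B)
    (∀ u : Mat ≃ᵃ[ZMod 2] Mat, u '' GLset = GLset →
      ∀ X Y, B (u.linear X) (u.linear Y) = B X Y) := by
  intro Mat GLset B
  have hBBf : ∀ X Y : Mat2, B X Y = Bf X Y := by
    intro X Y
    show (X + Y).det - X.det - Y.det = Bf X Y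
    rw [d2_eq, d2_eq, d2_eq, pol]; ring
  refine ⟨fun u v _ _ => rfl, ?_, ?_, ?_⟩
  · -- injectivity
    intro u v hu hv hlin
    have hu' := mem_iff u hu
    have hv' := mem_iff v hv
    have h0 : u 0 = v 0 := by
      have hN : ∀ N : Mat2, d2 (N + (u 0 - v 0)) = d2 N := by
        intro N
        set X : Mat2 := u.linear.symm (N - v 0) with hX
        have hlX : u.linear X = N - v 0 := u.linear.apply_symm_apply _
        have h1 : u X = N + (u 0 - v 0) := by
          rw [hform u X, hlX]; abel
        have h2 : v X = N := by
          rw [hform v X, ← hlin, hlX]; abel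
        calc d2 (N + (u 0 - v 0)) = d2 (u X) := by rw [h1]
          _ = d2 X := hu' X
          _ = d2 (v X) := (hv' X).symm
          _ = d2 N := by rw [h2]
      have := translate_eq_zero _ hN
      have := sub_eq_zero.mp this
      exact this
    apply AffineEquiv.ext
    intro X
    rw [hform u X, hform v X, hlin, h0]
  · -- surjectivity
    intro g hB
    have hBf : ∀ X Y : Mat2, Bf (g X) (g Y) = Bf X Y := by
      intro X Y
      have := hB X Y
      rwa [hBBf, hBBf] at this
    have hLadd : ∀ X Y : Mat2,
        d2 (g (X + Y)) - d2 (X + Y) = (d2 (g X) - d2 X) + (d2 (g Y) - d2 Y) := by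
      intro X Y
      rw [map_add, pol, pol, hBf]
      ring
    have hLsmul : ∀ (x : ZMod 2) (M : Mat2),
        d2 (g (x • M)) - d2 (x • M) = x * (d2 (g M) - d2 M) := by
      intro x M
      rcases (by decide : ∀ x : ZMod 2, x = 0 ∨ x = 1) x with h | h <;> subst h
      · rw [zero_smul, map_zero, d2_zero, zero_mul, sub_self]
      · simp
    have hrep : ∀ X : Mat2, d2 (g X) - d2 X =
        X 0 0 * (d2 (g !![1,0;0,0]) - d2 !![1,0;0,0]) +
        X 0 1 * (d2 (g !![0,1;0,0]) - d2 !![0,1;0,0]) +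
        X 1 0 * (d2 (g !![0,0;1,0]) - d2 !![0,0;1,0]) +
        X 1 1 * (d2 (g !![0,0;0,1]) - d2 !![0,0;0,1]) := by
      intro X
      conv_lhs => rw [repr2 X]
      rw [hLadd, hLadd, hLadd, hLsmul, hLsmul, hLsmul, hLsmul]
    obtain ⟨c, hLc⟩ : ∃ c : Mat2, ∀ X : Mat2, d2 (g X) - d2 X = Bf X c := by
      refine ⟨!![d2 (g !![0,0;0,1]) - d2 !![0,0;0,1], d2 (g !![0,0;1,0]) - d2 !![0,0;1,0];
        d2 (g !![0,1;0,0]) - d2 !![0,1;0,0], d2 (g !![1,0;0,0]) - d2 !![1,0;0,0]], fun X => ?_⟩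
      rw [hrep X, Bf_concrete]
      linear_combination (X 0 1 * (d2 (g !![0,1;0,0]) - d2 !![0,1;0,0]) +
        X 1 0 * (d2 (g !![0,0;1,0]) - d2 !![0,0;1,0])) * two0
    have hKey : ∀ X : Mat2, d2 (g X + g c) = d2 X + d2 c := by
      intro X
      rw [pol, hBf X c, sub_eq_iff_eq_add.mp (hLc X), sub_eq_iff_eq_add.mp (hLc c), Bf_self]
      linear_combination (Bf X c) * two0
    have hKzero : d2 c = 0 := by
      by_contra hne
      have h1 : d2 c = 1 := (by decide : ∀ x : ZMod 2, x ≠ 0 → x = 1) _ hne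
      have hle : (Finset.univ.filter (fun M : Mat2 => d2 M = 0)).card ≤
          (Finset.univ.filter (fun M : Mat2 => d2 M = 1)).card := by
        apply Finset.card_le_card_of_injOn (fun M : Mat2 => g M + g c)
        · intro M hM
          simp only [Finset.mem_coe, Finset.mem_filter, Finset.mem_univ, true_and] at hM ⊢
          rw [hKey, hM, h1, zero_add]
        · intro a _ b _ hab
          exact g.injective (add_right_cancel hab)
      rw [card10, card6] at hle
      omega
    have hdet : ∀ X : Mat2, d2 (g X + g c) = d2 X := by
      intro X; rw [hKey, hKzero, add_zero]
    refine ⟨AffineEquiv.mk' (fun X => g X + g c) g 0 (fun p => by simp), ?_, rfl⟩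
    exact image_eq (AffineEquiv.mk' (fun X => g X + g c) g 0 (fun p => by simp))
      (fun X => hdet X)
  · -- linear part is symplectic
    intro u hu X Y
    rw [hBBf, hBBf]
    have hd : ∀ Z : Mat2, d2 (u.linear Z + u 0) = d2 Z := by
      intro Z
      rw [← hform u Z]
      exact mem_iff u hu Z
    exact symp_of_det u.linear (u 0) hd X Y
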